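/- Let $Q_2 \in \mathbb{R}^{n\times(n-m)}$ have orthonormal columns, let $P_j \in \mathbb{R}^{n\times j}$ have orthonormal columns, let $X_j \in \mathbb{R}^{n\times j}$, and let $S_j, T_j \in \mathbb{R}^{j\times j}$ satisfy $Q_2^\top A P_j = Q_2^\top X_j S_j$ and $Q_2^\top E P_j = Q_2^\top X_j T_j$. Let $\epsilon_1, \epsilon_2 \in \mathbb{C}$ with $\epsilon_2 \neq 0$, and assume $Q_2^\top(A - \frac{\epsilon_1}{\epsilon_2}E)$ has full row rank $n-m$. Then the complex matrix $M = \begin{pmatrix} Q_2^\top A & -\epsilon_1 Q_2^\top & -Q_2^\top X_j & 0 \\ Q_2^\top E & -\epsilon_2 Q_2^\top & 0 & -Q_2^\top X_j \\ P_j^\top & 0 & 0 & 0 \end{pmatrix}$ has full row rank $2(n-m) + j$; equivalently, $\dim_{\mathbb{C}} \mathcal{N}(M) = 2m + j$. -/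

import Mathlib

open Matrix

/-- `v ᵥ* (b • M) = b • (v ᵥ* M)` over `ℂ`. -/
lemma stmt19_vecMul_smul_mat {m n : Type*} [Fintype m] (b : ℂ)
    (M : Matrix m n ℂ) (v : m → ℂ) : v ᵥ* (b • M) = b • (v ᵥ* M) := by
  ext i
  simp [Matrix.vecMul, dotProduct, Finset.mul_sum, mul_left_comm, mul_comm]

/-- `v ᵥ* (M - N) = v ᵥ* M - v ᵥ* N`. -/
lemma stmt19_vecMul_sub {m n : Type*} [Fintype m]
    (M N : Matrix m n ℂ) (v : m → ℂ) : v ᵥ* (M - N) = v ᵥ* M - v ᵥ* N := by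
  ext i
  simp [Matrix.vecMul, dotProduct, mul_sub, Finset.sum_sub_distrib]

/-- A matrix with full row rank has trivial left kernel. -/
lemma stmt19_left_ker {k n : ℕ} (B : Matrix (Fin k) (Fin n) ℂ) (hB : B.rank = k)
    (u : Fin k → ℂ) (hu : u ᵥ* B = 0) : u = 0 := by
  have h1 : Bᵀ.rank = k := by rw [Matrix.rank_transpose]; exact hB
  have h2 : Bᵀ *ᵥ u = 0 := by rw [Matrix.mulVec_transpose]; exact hu
  have hrn := LinearMap.finrank_range_add_finrank_ker Bᵀ.mulVecLin
  have hdom : Module.finrank ℂ (Fin k → ℂ) = k := by simp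
  rw [hdom] at hrn
  have hrange : Module.finrank ℂ (LinearMap.range Bᵀ.mulVecLin) = k := h1
  rw [hrange] at hrn
  have hker0 : Module.finrank ℂ (LinearMap.ker Bᵀ.mulVecLin) = 0 := by omega
  have hker : LinearMap.ker Bᵀ.mulVecLin = ⊥ :=
    Submodule.finrank_eq_zero.mp hker0
  have : u ∈ LinearMap.ker Bᵀ.mulVecLin := by
    rw [LinearMap.mem_ker, Matrix.mulVecLin_apply]; exact h2
  rw [hker] at this
  simpa using this

/-- the complex matrix
`M = [[Q₂ᵀA, -ε₁Q₂ᵀ, -Q₂ᵀXⱼ, 0], [Q₂ᵀE, -ε₂Q₂ᵀ, 0, -Q₂ᵀXⱼ], [Pⱼᵀ, 0, 0, 0]]`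
has full row rank `2(n - m) + j` (here `k = n - m`). -/
theorem stmt19 {n m k j : ℕ} (hn : m + k = n)
    (A E : Matrix (Fin n) (Fin n) ℝ)
    (Q2 : Matrix (Fin n) (Fin k) ℝ) (hQ2 : Q2ᵀ * Q2 = 1)
    (Pj : Matrix (Fin n) (Fin j) ℝ) (hPj : Pjᵀ * Pj = 1)
    (Xj : Matrix (Fin n) (Fin j) ℝ) (Sj Tj : Matrix (Fin j) (Fin j) ℝ)
    (hS : Q2ᵀ * A * Pj = Q2ᵀ * Xj * Sj) (hT : Q2ᵀ * E * Pj = Q2ᵀ * Xj * Tj)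
    (ε1 ε2 : ℂ) (hε2 : ε2 ≠ 0)
    (hfull : ((Q2.map Complex.ofReal)ᵀ *
        (A.map Complex.ofReal - (ε1 / ε2) • E.map Complex.ofReal)).rank = k) :
    (Matrix.fromBlocks
        ((Q2.map Complex.ofReal)ᵀ * A.map Complex.ofReal)
        (fromCols (-ε1 • (Q2.map Complex.ofReal)ᵀ)
          (fromCols (-((Q2.map Complex.ofReal)ᵀ * Xj.map Complex.ofReal)) 0))
        (fromRows ((Q2.map Complex.ofReal)ᵀ * E.map Complex.ofReal)
          (Pj.map Complex.ofReal)ᵀ)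
        (fromRows
          (fromCols (-ε2 • (Q2.map Complex.ofReal)ᵀ)
            (fromCols 0 (-((Q2.map Complex.ofReal)ᵀ * Xj.map Complex.ofReal))))
          0)).rank = 2 * k + j := by
  classical
  have hfc : (Complex.ofReal : ℝ → ℂ) = ⇑Complex.ofRealHom := rfl
  set Q : Matrix (Fin n) (Fin k) ℂ := Q2.map Complex.ofReal with hQdef
  set Ac : Matrix (Fin n) (Fin n) ℂ := A.map Complex.ofReal with hAdef
  set Ec : Matrix (Fin n) (Fin n) ℂ := E.map Complex.ofReal with hEdef
  set Xc : Matrix (Fin n) (Fin j) ℂ := Xj.map Complex.ofReal with hXdef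
  set Pc : Matrix (Fin n) (Fin j) ℂ := Pj.map Complex.ofReal with hPdef
  -- complexified hypotheses
  have hQ1 : Qᵀ * Q = 1 := by
    have := congrArg (fun M => M.map (Complex.ofReal : ℝ → ℂ)) hQ2
    simpa [hQdef, hPdef, hfc, ← Matrix.transpose_map, Matrix.map_mul, Matrix.map_one] using this
  have hP1 : Pcᵀ * Pc = 1 := by
    have := congrArg (fun M => M.map (Complex.ofReal : ℝ → ℂ)) hPj
    simpa [hQdef, hPdef, hfc, ← Matrix.transpose_map, Matrix.map_mul, Matrix.map_one] using this
  have hSc : Qᵀ * Ac * Pc = Qᵀ * Xc * Sj.map Complex.ofReal := by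
    have := congrArg (fun M => M.map (Complex.ofReal : ℝ → ℂ)) hS
    simpa [hQdef, hAdef, hEdef, hXdef, hPdef, hfc, ← Matrix.transpose_map, Matrix.map_mul] using this
  have hTc : Qᵀ * Ec * Pc = Qᵀ * Xc * Tj.map Complex.ofReal := by
    have := congrArg (fun M => M.map (Complex.ofReal : ℝ → ℂ)) hT
    simpa [hQdef, hAdef, hEdef, hXdef, hPdef, hfc, ← Matrix.transpose_map, Matrix.map_mul] using this
  -- the big matrix
  set M : Matrix (Fin k ⊕ (Fin k ⊕ Fin j)) (Fin n ⊕ (Fin n ⊕ (Fin j ⊕ Fin j))) ℂ :=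
    Matrix.fromBlocks (Qᵀ * Ac)
      (fromCols (-ε1 • Qᵀ) (fromCols (-(Qᵀ * Xc)) 0))
      (fromRows (Qᵀ * Ec) Pcᵀ)
      (fromRows (fromCols (-ε2 • Qᵀ) (fromCols 0 (-(Qᵀ * Xc)))) 0) with hMdef
  -- key: trivial left kernel
  have key : ∀ v : Fin k ⊕ (Fin k ⊕ Fin j) → ℂ, v ᵥ* M = 0 → v = 0 := by
    intro v hv
    set u : Fin k → ℂ := v ∘ Sum.inl with hu
    set w : Fin k → ℂ := v ∘ Sum.inr ∘ Sum.inl with hw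
    set p : Fin j → ℂ := v ∘ Sum.inr ∘ Sum.inr with hp
    have hvelim : v = Sum.elim u (Sum.elim w p) := by
      funext x; rcases x with x | x | x <;> rfl
    rw [hvelim, hMdef, Matrix.vecMul_fromBlocks] at hv
    -- extract the four equations
    have e1 : u ᵥ* (Qᵀ * Ac) + (w ᵥ* (Qᵀ * Ec) + p ᵥ* Pcᵀ) = 0 := by
      funext c
      have h := congrFun hv (Sum.inl c)
      simpa [Matrix.sumElim_vecMul_fromRows] using h
    have e2 : ε1 • (u ᵥ* Qᵀ) + ε2 • (w ᵥ* Qᵀ) = 0 := by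
      funext c
      have h := congrFun hv (Sum.inr (Sum.inl c))
      simp only [Sum.elim_comp_inl, Sum.elim_comp_inr, Matrix.vecMul_fromCols,
        Matrix.sumElim_vecMul_fromRows, Matrix.vecMul_zero, add_zero,
        Matrix.vecMul_neg, stmt19_vecMul_smul_mat, Sum.elim_inr, Sum.elim_inl, Pi.add_apply,
        Pi.smul_apply, Pi.zero_apply, neg_smul, Pi.neg_apply, smul_eq_mul] at h ⊢
      have : -(ε1 * (u ᵥ* Qᵀ) c) + -(ε2 * (w ᵥ* Qᵀ) c) = 0 := h
      linear_combination -this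
    have hXu : u ᵥ* (Qᵀ * Xc) = 0 := by
      funext c
      have h := congrFun hv (Sum.inr (Sum.inr (Sum.inl c)))
      simpa [Matrix.sumElim_vecMul_fromRows, Matrix.vecMul_fromCols,
        Matrix.vecMul_zero, Matrix.vecMul_neg, neg_eq_zero] using h
    have hXw : w ᵥ* (Qᵀ * Xc) = 0 := by
      funext c
      have h := congrFun hv (Sum.inr (Sum.inr (Sum.inr c)))
      simpa [Matrix.sumElim_vecMul_fromRows, Matrix.vecMul_fromCols,
        Matrix.vecMul_zero, Matrix.vecMul_neg, neg_eq_zero] using h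
    -- from e2: ε1 • u + ε2 • w = 0, hence w = -(ε1/ε2) • u
    have hz : ε1 • u + ε2 • w = 0 := by
      have hzQ : (ε1 • u + ε2 • w) ᵥ* Qᵀ = 0 := by
        rw [Matrix.add_vecMul, Matrix.smul_vecMul, Matrix.smul_vecMul]
        exact e2
      have := congrArg (fun x => x ᵥ* Q) hzQ
      simpa [Matrix.vecMul_vecMul, hQ1, Matrix.vecMul_one, Matrix.zero_vecMul] using this
    have hweq : w = (-(ε1 / ε2)) • u := by
      have h2 : ε2 • w = -(ε1 • u) := by
        rw [eq_neg_iff_add_eq_zero, add_comm]; exact hz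
      have := congrArg (fun x => ε2⁻¹ • x) h2
      simp only [smul_smul, inv_mul_cancel₀ hε2, one_smul] at this
      rw [this]
      funext i
      simp [div_eq_mul_inv]
      ring
    -- substitute into e1
    set D : Matrix (Fin k) (Fin n) ℂ := Qᵀ * (Ac - (ε1 / ε2) • Ec) with hDdef
    have hD : u ᵥ* D = u ᵥ* (Qᵀ * Ac) + w ᵥ* (Qᵀ * Ec) := by
      rw [hDdef, Matrix.mul_sub, Matrix.mul_smul, stmt19_vecMul_sub,
        stmt19_vecMul_smul_mat, hweq, Matrix.smul_vecMul]
      module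
    have e1' : u ᵥ* D + p ᵥ* Pcᵀ = 0 := by
      rw [hD, add_assoc]; exact e1
    -- multiply on the right by Pc to get p = 0
    have hDP : D * Pc = Qᵀ * Xc * Sj.map Complex.ofReal
        - (ε1 / ε2) • (Qᵀ * Xc * Tj.map Complex.ofReal) := by
      rw [hDdef, Matrix.mul_sub, Matrix.sub_mul, Matrix.mul_smul, Matrix.smul_mul,
        Matrix.mul_assoc, Matrix.mul_assoc, ← Matrix.mul_assoc, ← Matrix.mul_assoc,
        hSc, hTc]
    have hp0 : p = 0 := by
      have h := congrArg (fun x => x ᵥ* Pc) e1'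
      simp only [Matrix.add_vecMul, Matrix.vecMul_vecMul, hP1, Matrix.vecMul_one,
        Matrix.zero_vecMul, hDP] at h
      have hS0 : u ᵥ* (Qᵀ * Xc * Sj.map Complex.ofReal) = 0 := by
        rw [← Matrix.vecMul_vecMul, hXu, Matrix.zero_vecMul]
      have hT0 : u ᵥ* (Qᵀ * Xc * Tj.map Complex.ofReal) = 0 := by
        rw [← Matrix.vecMul_vecMul, hXu, Matrix.zero_vecMul]
      rw [stmt19_vecMul_sub, stmt19_vecMul_smul_mat, hS0, hT0] at h
      simpa using h
    have hu0 : u = 0 := by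
      apply stmt19_left_ker D hfull
      have := e1'
      rw [hp0, Matrix.zero_vecMul, add_zero] at this
      exact this
    have hw0 : w = 0 := by rw [hweq, hu0, smul_zero]
    rw [hvelim, hu0, hw0, hp0]
    funext x; rcases x with x | x | x <;> rfl
  -- conclude via rank–nullity for `Mᵀ`
  rw [← Matrix.rank_transpose M]
  have hker : LinearMap.ker Mᵀ.mulVecLin = ⊥ := by
    ext x
    simp only [LinearMap.mem_ker, Matrix.mulVecLin_apply, Submodule.mem_bot,
      Matrix.mulVec_transpose]
    constructor
    · exact key x
    · intro h; rw [h]; exact Matrix.zero_vecMul M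
  have hrn := LinearMap.finrank_range_add_finrank_ker Mᵀ.mulVecLin
  rw [hker, finrank_bot, add_zero] at hrn
  rw [Matrix.rank, hrn]
  simp [Module.finrank_fintype_fun_eq_card]
  omega
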